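/- arXiv:1206.2578 — 5 statements merged into one kernel-verified Lean document; each statement's English description precedes it below -/
import Mathlib

section
/- Let n ≥ 1, let ε > 0, let g : Tⁿ → ℝ be measurable with ‖g‖_{L^∞} ≤ 1, and let u : Tⁿ × ℝ → ℝ be continuously differentiable. Let H denote the Heaviside function (H(y) = 1 for y ≥ 0 and H(y) = 0 for y < 0). Then ∫_{Tⁿ} ∫_{−ε}^{ε} (1/2) | ∂_y u(x,y) − (1/ε) H(ε g(x) − y) + (1/ε) H(−y) |² dy dx ≥ (1/(2ε)) ( ∫_{Tⁿ} (1/2) | u(x,ε) − u(x,−ε) − g(x) | dx )². -/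
open MeasureTheory Real

noncomputable section

/-- The `n`-dimensional torus `(ℝ/ℤ)ⁿ`, with its normalized Haar (Lebesgue) probability
measure coming from the product measure-space structure. -/
abbrev Torus (n : ℕ) := Fin n → AddCircle (1 : ℝ)

/-- The Heaviside step function: `H(y) = 1` for `y ≥ 0` and `H(y) = 0` for `y < 0`. -/
def Hside (y : ℝ) : ℝ := if 0 ≤ y then 1 else 0

section Aux

open Set

instance : IsProbabilityMeasure (volume : Measure (AddCircle (1:ℝ))) :=
  ⟨by have := Fact.mk (by norm_num : (0:ℝ) < 1); simp [AddCircle.measure_univ]⟩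

instance : CompactSpace (AddCircle (1:ℝ)) := by
  have := Fact.mk (by norm_num : (0:ℝ) < 1); infer_instance

lemma Hside_nonneg (y : ℝ) : 0 ≤ Hside y := by unfold Hside; split <;> norm_num

lemma Hside_le_one (y : ℝ) : Hside y ≤ 1 := by unfold Hside; split <;> norm_num

lemma measurable_Hside : Measurable Hside := by
  have h : Hside = (Set.Ici (0:ℝ)).indicator (fun _ => (1:ℝ)) := by
    funext y; simp [Hside, Set.indicator_apply, Set.mem_Ici]
  rw [h]; exact measurable_const.indicator measurableSet_Ici

lemma intervalIntegrable_Hside (a b c : ℝ) :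
    IntervalIntegrable (fun y => Hside (c - y)) volume a b := by
  rw [intervalIntegrable_iff]
  apply Measure.integrableOn_of_bounded (M := 1)
  · exact (measure_Ioc_lt_top).ne
  · exact (measurable_Hside.comp (measurable_const.sub measurable_id)).aestronglyMeasurable
  · exact Filter.Eventually.of_forall fun y => by
      rw [Real.norm_eq_abs, abs_le]
      exact ⟨by linarith [Hside_nonneg (c - y)], Hside_le_one _⟩

lemma integral_Hside (a b c : ℝ) (hab : a ≤ b) (h1 : a ≤ c) (h2 : c ≤ b) :
    ∫ y in a..b, Hside (c - y) = c - a := by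
  have heq : (fun y => Hside (c - y)) = (Set.Iic c).indicator (fun _ => (1:ℝ)) := by
    funext y; simp [Hside, Set.indicator_apply, Set.mem_Iic, sub_nonneg]
  rw [intervalIntegral.integral_of_le hab, heq,
    setIntegral_indicator measurableSet_Iic, Set.Ioc_inter_Iic,
    min_eq_right h2, setIntegral_const]
  simp [Real.volume_Ioc, ENNReal.toReal_ofReal (by linarith : (0:ℝ) ≤ c - a)]
  exact h1

/-- Cauchy–Schwarz (variance form) for a finite measure. -/
lemma sq_integral_le {α : Type*} [MeasurableSpace α] {μ : Measure α} [IsFiniteMeasure μ]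
    {f : α → ℝ} (hf : Integrable f μ) (hf2 : Integrable (fun x => f x ^ 2) μ) :
    (∫ x, f x ∂μ) ^ 2 ≤ (μ Set.univ).toReal * ∫ x, f x ^ 2 ∂μ := by
  set c := (μ Set.univ).toReal with hcdef
  have hc0 : 0 ≤ c := ENNReal.toReal_nonneg
  rcases eq_or_lt_of_le hc0 with h0 | h0
  · have hμ : μ = 0 := by
      have h1 : μ Set.univ = 0 :=
        (ENNReal.toReal_eq_zero_iff _).mp h0.symm |>.resolve_right (measure_ne_top μ _)
      exact Measure.measure_univ_eq_zero.mp h1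
    rw [hμ]; simp
  · set I := ∫ x, f x ∂μ with hI
    set m := I / c with hm
    have key : 0 ≤ ∫ x, (f x - m)^2 ∂μ := integral_nonneg fun x => sq_nonneg _
    have hint : ∫ x, (f x - m)^2 ∂μ = (∫ x, f x ^ 2 ∂μ) - (2*m) * I + m^2 * c := by
      have expand : (fun x => (f x - m)^2)
          = fun x => (f x ^ 2 - (2*m) * f x) + m^2 := by
        funext x; ring
      have h1 : Integrable (fun x => f x ^ 2 - 2 * m * f x) μ := hf2.sub (hf.const_mul (2*m))
      have h2 : Integrable (fun x => 2 * m * f x) μ := hf.const_mul (2*m)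
      rw [expand, integral_add h1 (integrable_const _),
        integral_sub hf2 h2, MeasureTheory.integral_const_mul, integral_const]
      simp [smul_eq_mul, mul_comm]
      rfl
    rw [hint] at key
    have hmc : m * c = I := div_mul_cancel₀ _ (ne_of_gt h0)
    nlinarith [key, hmc, sq_nonneg m]

/-- The one-dimensional (per-slice) estimate: Jensen/Cauchy–Schwarz on `[-ε, ε]`. -/
lemma inner_step (ε : ℝ) (hε : 0 < ε) (γ : ℝ) (hγ : |γ| ≤ 1)
    (v v' : ℝ → ℝ) (hv' : Continuous v') (hv : ∀ y, HasDerivAt v (v' y) y) :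
    (1/(4*ε)) * |v ε - v (-ε) - γ| ^ 2
      ≤ ∫ y in (-ε)..ε, (1/2) * |v' y - (1/ε) * Hside (ε * γ - y) + (1/ε) * Hside (-y)| ^ 2 := by
  set c := ε * γ with hc
  have hc1 : -ε ≤ c := by nlinarith [abs_le.mp hγ]
  have hc2 : c ≤ ε := by nlinarith [abs_le.mp hγ]
  have hle : (-ε : ℝ) ≤ ε := by linarith
  set f : ℝ → ℝ := fun y => v' y - (1/ε) * Hside (c - y) + (1/ε) * Hside (-y) with hf
  -- interval integrability of f
  have hH1 : IntervalIntegrable (fun y => (1/ε) * Hside (c - y)) volume (-ε) ε :=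
    (intervalIntegrable_Hside _ _ c).const_mul _
  have hH2 : IntervalIntegrable (fun y => (1/ε) * Hside (-y)) volume (-ε) ε := by
    have := (intervalIntegrable_Hside (-ε) ε 0).const_mul (1/ε)
    simpa using this
  have hv'i : IntervalIntegrable v' volume (-ε) ε := hv'.intervalIntegrable _ _
  have hfi : IntervalIntegrable f volume (-ε) ε := (hv'i.sub hH1).add hH2
  -- the integral of f
  have hfeq : ∫ y in (-ε)..ε, f y = v ε - v (-ε) - γ := by
    rw [hf]
    rw [intervalIntegral.integral_add (hv'i.sub hH1) hH2,
      intervalIntegral.integral_sub hv'i hH1,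
      intervalIntegral.integral_eq_sub_of_hasDerivAt (fun y _ => hv y) hv'i,
      intervalIntegral.integral_const_mul, intervalIntegral.integral_const_mul]
    have e2 : ∫ y in (-ε)..ε, Hside (-y) = ∫ y in (-ε)..ε, Hside (0 - y) := by
      simp
    rw [integral_Hside _ _ _ hle hc1 hc2, e2,
      integral_Hside _ _ _ hle (by linarith) (by linarith)]
    field_simp
    ring
  -- boundedness / integrability of f^2 on the interval
  obtain ⟨M, hM⟩ := (isCompact_Icc : IsCompact (Icc (-ε) ε)).exists_bound_of_continuousOn
    hv'.continuousOn
  have hM0 : 0 ≤ M := le_trans (norm_nonneg _) (hM 0 (by constructor <;> linarith))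
  have hfmeas : Measurable f := by
    apply Measurable.add
    · exact hv'.measurable.sub
        ((measurable_Hside.comp (measurable_const.sub measurable_id)).const_mul _)
    · exact (measurable_Hside.comp measurable_neg).const_mul _
  have hfbound : ∀ y ∈ Icc (-ε) ε, |f y| ≤ M + 2/ε := by
    intro y hy
    have h1 : |v' y| ≤ M := hM y hy
    have h2 : |(1/ε) * Hside (c - y)| ≤ 1/ε := by
      rw [abs_mul, abs_of_pos (by positivity : (0:ℝ) < 1/ε)]
      have := abs_le.mpr ⟨by linarith [Hside_nonneg (c-y)], Hside_le_one (c-y)⟩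
      nlinarith [le_of_lt (by positivity : (0:ℝ) < 1/ε)]
    have h3 : |(1/ε) * Hside (-y)| ≤ 1/ε := by
      rw [abs_mul, abs_of_pos (by positivity : (0:ℝ) < 1/ε)]
      have := abs_le.mpr ⟨by linarith [Hside_nonneg (-y)], Hside_le_one (-y)⟩
      nlinarith [le_of_lt (by positivity : (0:ℝ) < 1/ε)]
    calc |f y| ≤ |v' y - (1/ε) * Hside (c - y)| + |(1/ε) * Hside (-y)| := abs_add_le _ _
      _ ≤ |v' y| + |(1/ε) * Hside (c - y)| + |(1/ε) * Hside (-y)| := by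
          linarith [abs_sub (v' y) ((1/ε) * Hside (c - y))]
      _ ≤ M + 2/ε := by
          have h4 : (2:ℝ)/ε = 1/ε + 1/ε := by ring
          linarith
  have hf2i : IntegrableOn (fun y => f y ^ 2) (Ioc (-ε) ε) volume := by
    refine Measure.integrableOn_of_bounded (M := (M + 2/ε)^2) (measure_Ioc_lt_top).ne
      ((hfmeas.pow_const 2)).aestronglyMeasurable ?_
    filter_upwards [ae_restrict_mem measurableSet_Ioc] with y hy
    rw [Real.norm_eq_abs, abs_pow, sq_abs]
    have := hfbound y (Ioc_subset_Icc_self hy)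
    have h0 : (0:ℝ) ≤ M + 2/ε := by positivity
    calc f y ^ 2 = |f y| ^ 2 := (sq_abs _).symm
      _ ≤ (M + 2/ε) ^ 2 := by nlinarith [abs_nonneg (f y)]
  have hfi' : IntegrableOn f (Ioc (-ε) ε) volume := by
    rw [intervalIntegrable_iff] at hfi
    rwa [Set.uIoc_of_le hle] at hfi
  -- Cauchy–Schwarz on the interval
  have hμ : ((volume.restrict (Ioc (-ε) ε)) Set.univ).toReal = 2*ε := by
    rw [Measure.restrict_apply_univ, Real.volume_Ioc,
      ENNReal.toReal_ofReal (by linarith : (0:ℝ) ≤ ε - -ε)]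
    ring
  have hfin : IsFiniteMeasure (volume.restrict (Ioc (-ε:ℝ) ε)) := by
    constructor
    rw [Measure.restrict_apply_univ, Real.volume_Ioc]
    exact ENNReal.ofReal_lt_top
  have hCS := sq_integral_le (μ := volume.restrict (Ioc (-ε) ε)) hfi' hf2i
  rw [hμ] at hCS
  -- convert the goal to set integrals
  have hgoal_eq : ∫ y in (-ε)..ε,
        (1/2) * |v' y - (1/ε) * Hside (ε * γ - y) + (1/ε) * Hside (-y)| ^ 2
      = (1/2) * ∫ y in Ioc (-ε) ε, f y ^ 2 := by
    rw [intervalIntegral.integral_of_le hle, ← integral_const_mul]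
    apply setIntegral_congr_fun measurableSet_Ioc
    intro y _
    simp only
    rw [sq_abs]
  have hint_eq : ∫ y in Ioc (-ε) ε, f y = v ε - v (-ε) - γ := by
    rw [← intervalIntegral.integral_of_le hle]; exact hfeq
  rw [hgoal_eq]
  rw [hint_eq] at hCS
  rw [sq_abs]
  have hI2 : 0 ≤ ∫ y in Ioc (-ε) ε, f y ^ 2 := integral_nonneg fun y => sq_nonneg _
  rw [div_mul_eq_mul_div, div_le_iff₀ (by linarith : (0:ℝ) < 4*ε)]
  nlinarith [hCS]

end Aux

/-- the key Jensen-inequality lower bound in the liminf part of the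
Γ-convergence theorem.  Here `u : Tⁿ × ℝ → ℝ` is continuously differentiable (we record
its continuity, its partial derivative `u'` in the `y`-direction, and the continuity of
that derivative), `g` is measurable with `‖g‖_{L^∞} ≤ 1`, and `ε > 0`.  Then
`∫_{Tⁿ} ∫_{-ε}^{ε} ½ |∂_y u - (1/ε) H(εg(x)-y) + (1/ε) H(-y)|² dy dx
  ≥ (1/(2ε)) (∫_{Tⁿ} ½ |u(x,ε) - u(x,-ε) - g(x)| dx)²`. -/
theorem jensen_lower_bound {n : ℕ} (hn : 1 ≤ n) (ε : ℝ) (hε : 0 < ε)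
    (g : Torus n → ℝ) (hg_meas : Measurable g)
    (hg_bound : ∀ᵐ x : Torus n, |g x| ≤ 1)
    (u u' : Torus n → ℝ → ℝ)
    (hu_cont : Continuous (Function.uncurry u))
    (hu'_cont : Continuous (Function.uncurry u'))
    (hu_deriv : ∀ (x : Torus n) (y : ℝ), HasDerivAt (u x) (u' x y) y) :
    (∫ x : Torus n, ∫ y in (-ε)..ε,
        (1/2) * |u' x y - (1/ε) * Hside (ε * g x - y) + (1/ε) * Hside (-y)| ^ 2)
      ≥ (1/(2*ε)) *
          (∫ x : Torus n, (1/2) * |u x ε - u x (-ε) - g x|) ^ 2 := by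
  classical
  have hle : (-ε:ℝ) ≤ ε := by linarith
  set D : Torus n → ℝ := fun x => u x ε - u x (-ε) - g x with hD
  set G : Torus n → ℝ := fun x => ∫ y in (-ε)..ε,
      (1/2) * |u' x y - (1/ε) * Hside (ε * g x - y) + (1/ε) * Hside (-y)| ^ 2 with hG
  -- the joint integrand is measurable
  set Φ : Torus n × ℝ → ℝ := fun p =>
      (1/2) * |u' p.1 p.2 - (1/ε) * Hside (ε * g p.1 - p.2) + (1/ε) * Hside (-p.2)| ^ 2 with hΦ
  have hΦmeas : Measurable Φ := by
    apply Measurable.const_mul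
    apply Measurable.pow_const
    apply Measurable.abs
    exact (hu'_cont.measurable.sub
        ((measurable_Hside.comp
          (((hg_meas.comp measurable_fst).const_mul ε).sub measurable_snd)).const_mul _)).add
      ((measurable_Hside.comp measurable_snd.neg).const_mul _)
  have hGmeas : AEStronglyMeasurable G volume := by
    have hGeq : G = fun x => ∫ y, Φ (x, y) ∂(volume.restrict (Set.Ioc (-ε) ε)) := by
      funext x
      exact intervalIntegral.integral_of_le hle
    rw [hGeq]
    exact (hΦmeas.aestronglyMeasurable).integral_prod_right'
  -- uniform bounds from compactness
  obtain ⟨C, hC⟩ :=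
    ((isCompact_univ : IsCompact (Set.univ : Set (Torus n))).prod
      (isCompact_Icc : IsCompact (Set.Icc (-ε) ε))).exists_bound_of_continuousOn
      hu'_cont.continuousOn
  have hC0 : 0 ≤ C := le_trans (norm_nonneg _)
    (hC ((fun _ => 0 : Torus n), 0) ⟨Set.mem_univ _, by constructor <;> dsimp only <;> linarith⟩)
  have hGbound : ∀ x, ‖G x‖ ≤ (1/2) * (C + 2/ε)^2 * (2*ε) := by
    intro x
    have habs : |ε - -ε| = 2*ε := by rw [abs_of_pos (by linarith)]; ring
    have := intervalIntegral.norm_integral_le_of_norm_le_const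
      (a := -ε) (b := ε) (C := (1/2) * (C + 2/ε)^2)
      (f := fun y => (1/2) * |u' x y - (1/ε) * Hside (ε * g x - y) + (1/ε) * Hside (-y)| ^ 2)
      ?_
    · rw [habs] at this; exact this
    · intro y hy
      rw [Set.uIoc_of_le hle] at hy
      have hyIcc : y ∈ Set.Icc (-ε) ε := Set.Ioc_subset_Icc_self hy
      have h1 : |u' x y| ≤ C := hC (x, y) ⟨Set.mem_univ _, hyIcc⟩
      have h2 : |(1/ε) * Hside (ε * g x - y)| ≤ 1/ε := by
        rw [abs_mul, abs_of_pos (by positivity : (0:ℝ) < 1/ε)]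
        have := abs_le.mpr ⟨by linarith [Hside_nonneg (ε * g x - y)],
          Hside_le_one (ε * g x - y)⟩
        nlinarith [le_of_lt (by positivity : (0:ℝ) < 1/ε)]
      have h3 : |(1/ε) * Hside (-y)| ≤ 1/ε := by
        rw [abs_mul, abs_of_pos (by positivity : (0:ℝ) < 1/ε)]
        have := abs_le.mpr ⟨by linarith [Hside_nonneg (-y)], Hside_le_one (-y)⟩
        nlinarith [le_of_lt (by positivity : (0:ℝ) < 1/ε)]
      have habs2 : |u' x y - (1/ε) * Hside (ε * g x - y) + (1/ε) * Hside (-y)| ≤ C + 2/ε := by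
        calc |u' x y - (1/ε) * Hside (ε * g x - y) + (1/ε) * Hside (-y)|
            ≤ |u' x y - (1/ε) * Hside (ε * g x - y)| + |(1/ε) * Hside (-y)| := abs_add_le _ _
          _ ≤ |u' x y| + |(1/ε) * Hside (ε * g x - y)| + |(1/ε) * Hside (-y)| := by
              linarith [abs_sub (u' x y) ((1/ε) * Hside (ε * g x - y))]
          _ ≤ C + 2/ε := by
              have h4 : (2:ℝ)/ε = 1/ε + 1/ε := by ring
              linarith
      rw [Real.norm_eq_abs, abs_mul, abs_of_nonneg (by norm_num : (0:ℝ) ≤ 1/2),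
        abs_pow, abs_abs]
      have h5 : (0:ℝ) ≤ C + 2/ε := by positivity
      nlinarith [abs_nonneg (u' x y - (1/ε) * Hside (ε * g x - y) + (1/ε) * Hside (-y))]
  have hGint : Integrable G volume :=
    Integrable.mono' (integrable_const _) hGmeas (Filter.Eventually.of_forall hGbound)
  -- `D` is measurable and bounded a.e.
  have hDmeas : Measurable D := by
    apply Measurable.sub
    apply Measurable.sub
    · exact hu_cont.measurable.comp (measurable_id.prodMk measurable_const)
    · exact hu_cont.measurable.comp (measurable_id.prodMk measurable_const)
    · exact hg_meas
  obtain ⟨Cu, hCu⟩ :=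
    ((isCompact_univ : IsCompact (Set.univ : Set (Torus n))).prod
      (isCompact_Icc : IsCompact (Set.Icc (-ε) ε))).exists_bound_of_continuousOn
      hu_cont.continuousOn
  have hDbound : ∀ᵐ x : Torus n, |D x| ≤ 2*Cu + 1 := by
    filter_upwards [hg_bound] with x hgx
    have h1 : |u x ε| ≤ Cu := hCu (x, ε) ⟨Set.mem_univ _, by constructor <;> dsimp only <;> linarith⟩
    have h2 : |u x (-ε)| ≤ Cu := hCu (x, -ε) ⟨Set.mem_univ _, by constructor <;> dsimp only <;> linarith⟩
    calc |D x| ≤ |u x ε - u x (-ε)| + |g x| := abs_sub _ _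
      _ ≤ |u x ε| + |u x (-ε)| + |g x| := by linarith [abs_sub (u x ε) (u x (-ε))]
      _ ≤ 2*Cu + 1 := by linarith
  have hCu0 : 0 ≤ Cu := le_trans (norm_nonneg _)
    (hCu ((fun _ => 0 : Torus n), 0) ⟨Set.mem_univ _, by constructor <;> dsimp only <;> linarith⟩)
  have hDabs_int : Integrable (fun x => |D x|) volume := by
    refine Integrable.mono' (integrable_const (2*Cu + 1))
      hDmeas.abs.aestronglyMeasurable ?_
    filter_upwards [hDbound] with x hx
    rwa [Real.norm_eq_abs, abs_abs]
  have hD2_int : Integrable (fun x => |D x| ^ 2) volume := by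
    refine Integrable.mono' (integrable_const ((2*Cu + 1)^2))
      ((hDmeas.abs.pow_const 2).aestronglyMeasurable) ?_
    filter_upwards [hDbound] with x hx
    rw [Real.norm_eq_abs, abs_pow, abs_abs]
    nlinarith [abs_nonneg (D x)]
  -- pointwise (a.e.) lower bound for the inner integral
  have hpt : ∀ᵐ x : Torus n, (1/(4*ε)) * |D x| ^ 2 ≤ G x := by
    filter_upwards [hg_bound] with x hx
    have hcont : Continuous (u' x) := hu'_cont.comp (Continuous.prodMk_right x)
    exact inner_step ε hε (g x) hx (u x) (u' x) hcont (hu_deriv x)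
  have step1 : ∫ x : Torus n, (1/(4*ε)) * |D x| ^ 2 ≤ ∫ x : Torus n, G x :=
    integral_mono_ae (hD2_int.const_mul _) hGint hpt
  have step2 : (∫ x : Torus n, |D x|) ^ 2 ≤ ∫ x : Torus n, |D x| ^ 2 := by
    have h := sq_integral_le (μ := (volume : Measure (Torus n))) hDabs_int hD2_int
    simpa [measure_univ] using h
  have hJ : 0 ≤ ∫ x : Torus n, |D x| := integral_nonneg fun x => abs_nonneg _
  rw [ge_iff_le]
  have hRHS : (∫ x : Torus n, (1/2) * |u x ε - u x (-ε) - g x|)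
      = (1/2) * ∫ x : Torus n, |D x| := integral_const_mul _ _
  rw [hRHS]
  have hmul : ∫ x : Torus n, (1/(4*ε)) * |D x| ^ 2
      = (1/(4*ε)) * ∫ x : Torus n, |D x| ^ 2 := integral_const_mul _ _
  rw [hmul] at step1
  set J := ∫ x : Torus n, |D x| with hJdef
  set S := ∫ x : Torus n, |D x| ^ 2 with hSdef
  have hS0 : 0 ≤ S := integral_nonneg fun x => sq_nonneg _
  have hG0 : (1/(4*ε)) * S ≤ ∫ x : Torus n, G x := step1
  have h8 : (1/(2*ε)) * ((1/2) * J)^2 ≤ (1/(4*ε)) * S := by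
    rw [div_mul_eq_mul_div 1 (2*ε), div_mul_eq_mul_div 1 (4*ε),
      div_le_div_iff₀ (by positivity) (by positivity)]
    nlinarith [sq_nonneg J, step2, hε]
  exact le_trans h8 hG0
end
end

section
/- Assume Hypothesis (H). Then the constrained minimal energy G is Lipschitz continuous; more precisely, |G(c₁) − G(c₂)| ≤ ‖φ‖_{L^∞} |c₁ − c₂| for all c₁, c₂ ∈ ℝ. -/
open MeasureTheory Real Filter

noncomputable section

/-- The Euclidean norm of an integer frequency vector `k ∈ ℤⁿ`. -/
def knorm {n : ℕ} (k : Fin n → ℤ) : ℝ := Real.sqrt (∑ i, ((k i : ℝ)) ^ 2)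

/-- The Fourier coefficient `ĝ(k) = ∫_{Tⁿ} g(x) e^{-2πi k·x} dx`. -/
def fCoeff {n : ℕ} (g : Torus n → ℝ) (k : Fin n → ℤ) : ℂ :=
  ∫ x : Torus n, (g x : ℂ) * ∏ i, fourier (-(k i)) (x i)

/-- The square of the `H^{1/2}` seminorm: `[g]_{H^{1/2}}² = Σ_k ‖k‖ |ĝ(k)|²`. -/
def H12SeminormSq {n : ℕ} (g : Torus n → ℝ) : ℝ :=
  ∑' k : Fin n → ℤ, knorm k * ‖fCoeff g k‖ ^ 2

/-- Finiteness of the `H^{1/2}` seminorm, `[g]_{H^{1/2}} < ∞`. -/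
def H12Finite {n : ℕ} (g : Torus n → ℝ) : Prop :=
  Summable fun k : Fin n → ℤ => knorm k * ‖fCoeff g k‖ ^ 2

/-- Hypothesis (H): `φ` is Lipschitz continuous (jointly), 1-periodic in its last
variable, and has zero average. -/
def HypH {n : ℕ} (φ : Torus n → ℝ → ℝ) : Prop :=
  (∃ L, LipschitzWith L (Function.uncurry φ)) ∧
  (∀ x y, φ x (y + 1) = φ x y) ∧
  (∫ x : Torus n, ∫ y in (0:ℝ)..1, φ x y) = 0

/-- The `L^∞` (sup) norm of the wiggly force `φ`. -/
def supNorm {n : ℕ} (φ : Torus n → ℝ → ℝ) : ℝ := ⨆ p : Torus n × ℝ, |φ p.1 p.2|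

/-- `g ∈ L²(Tⁿ)` is a stationary solution of `0 = -(-Δ)^{1/2} g + φ(x,g) + F` iff for every
`k ∈ ℤⁿ`, `‖k‖·ĝ(k)` equals the `k`-th Fourier coefficient of `x ↦ φ(x,g(x)) + F`. -/
def IsStationaryTorus {n : ℕ} (φ : Torus n → ℝ → ℝ) (F : ℝ) (g : Torus n → ℝ) : Prop :=
  MemLp g 2 (volume : Measure (Torus n)) ∧
  ∀ k : Fin n → ℤ, (knorm k : ℂ) * fCoeff g k = fCoeff (fun x => φ x (g x) + F) k

/-- The space `L²(Tⁿ;ℝ)`. -/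
abbrev L2T (n : ℕ) := Lp ℝ 2 (volume : Measure (Torus n))

/-- A mild solution of `g_t = -(-Δ)^{1/2} g + φ(x,g) + F` on the interval `I`: a continuous
curve in `L²` satisfying the variation-of-constants (Duhamel) formula coefficientwise. -/
def IsMildSolution {n : ℕ} (φ : Torus n → ℝ → ℝ) (F : ℝ) (I : Set ℝ)
    (g : ℝ → L2T n) : Prop :=
  ContinuousOn g I ∧
  ∀ t₁ ∈ I, ∀ t₂ ∈ I, t₁ ≤ t₂ → ∀ k : Fin n → ℤ,
    fCoeff (g t₂) k
      = Complex.exp (-(knorm k) * (t₂ - t₁)) * fCoeff (g t₁) k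
        + ∫ s in t₁..t₂,
            Complex.exp (-(knorm k) * (t₂ - s)) * fCoeff (fun x => φ x ((g s) x) + F) k

/-- The constant function `1` as an element of `L²(Tⁿ;ℝ)`. -/
def oneL2 (n : ℕ) : L2T n := MemLp.toLp (fun _ => (1:ℝ)) (memLp_const 1)

/-- The energy `E(g) = (1/2)[g]_{H^{1/2}}² - ∫_{Tⁿ} ∫_0^{g(x)} φ(x,γ) dγ dx`. -/
def energyE {n : ℕ} (φ : Torus n → ℝ → ℝ) (g : Torus n → ℝ) : ℝ :=
  (1/2) * H12SeminormSq g - ∫ x : Torus n, ∫ γ in (0:ℝ)..(g x), φ x γ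

/-- The constrained minimal energy
`G(c) = inf { E(g) : g ∈ L², [g]_{H^{1/2}} < ∞, ∫ g = c }`. -/
def Gmin {n : ℕ} (φ : Torus n → ℝ → ℝ) (c : ℝ) : ℝ :=
  sInf {e : ℝ | ∃ g : Torus n → ℝ, MemLp g 2 (volume : Measure (Torus n)) ∧
    H12Finite g ∧ (∫ x : Torus n, g x) = c ∧ energyE φ g = e}


/-! ### Auxiliary lemmas -/

instance inst_s3 : IsProbabilityMeasure (volume : Measure (AddCircle (1:ℝ))) :=
  ⟨by rw [AddCircle.measure_univ]; simp⟩

lemma integral_fourier_zero {m : ℤ} (hm : m ≠ 0) :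
    ∫ x : AddCircle (1:ℝ), (fourier m x : ℂ) = 0 := by
  have h := AddCircle.intervalIntegral_preimage (1:ℝ) 0 (fun z => (fourier m z : ℂ))
  rw [← h]
  have : ∀ x : ℝ, (fourier m (x : AddCircle (1:ℝ)) : ℂ)
      = Complex.exp ((2 * Real.pi * Complex.I * m) * x) := by
    intro x
    rw [fourier_coe_apply]
    push_cast
    ring_nf
  rw [intervalIntegral.integral_congr (fun x _ => this x)]
  rw [integral_exp_mul_complex (by simp [Complex.ext_iff, Real.pi_ne_zero, hm])]
  have h1 : Complex.exp (2 * Real.pi * Complex.I * m * 1) = 1 := by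
    rw [mul_one]
    have := Complex.exp_int_mul_two_pi_mul_I m
    rw [← this]; ring_nf
  push_cast
  rw [mul_one] at h1
  rw [zero_add, mul_one, mul_zero, h1, Complex.exp_zero, sub_self, zero_div]

lemma eprod_continuous {n : ℕ} (k : Fin n → ℤ) :
    Continuous fun x : Torus n => ∏ i, (fourier (-(k i)) (x i) : ℂ) :=
  continuous_finset_prod _ fun i _ => (fourier (-(k i))).continuous.comp (continuous_apply i)

lemma eprod_norm {n : ℕ} (k : Fin n → ℤ) (x : Torus n) :
    ‖∏ i, (fourier (-(k i)) (x i) : ℂ)‖ = 1 := by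
  rw [norm_prod]
  simp
  exact Finset.prod_eq_one fun i _ => Circle.norm_coe _

lemma eprod_integrable {n : ℕ} (k : Fin n → ℤ) :
    Integrable (fun x : Torus n => ∏ i, (fourier (-(k i)) (x i) : ℂ)) := by
  refine (integrable_const (1:ℝ)).mono' ((eprod_continuous k).aestronglyMeasurable) ?_
  exact Filter.Eventually.of_forall fun x => le_of_eq (eprod_norm k x)

lemma fCoeff_const {n : ℕ} (c : ℝ) {k : Fin n → ℤ} (hk : k ≠ 0) :
    fCoeff (fun _ => c) k = 0 := by
  unfold fCoeff
  rw [integral_const_mul]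
  have : (∫ x : Torus n, ∏ i, (fourier (-(k i)) (x i) : ℂ))
      = ∏ i, ∫ x : AddCircle (1:ℝ), (fourier (-(k i)) x : ℂ) :=
    MeasureTheory.integral_fintype_prod_eq_prod (fun i x => (fourier (-(k i)) x : ℂ))
  rw [this]
  obtain ⟨i, hi⟩ : ∃ i, k i ≠ 0 := by
    by_contra h
    push_neg at h
    exact hk (funext h)
  rw [Finset.prod_eq_zero (Finset.mem_univ i) (integral_fourier_zero (by simpa using hi))]
  simp

lemma fCoeff_add_const {n : ℕ} {g : Torus n → ℝ} (hg : Integrable g) (δ : ℝ)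
    {k : Fin n → ℤ} (hk : k ≠ 0) :
    fCoeff (fun x => g x + δ) k = fCoeff g k := by
  unfold fCoeff
  have h1 : Integrable (fun x : Torus n => (g x : ℂ) * ∏ i, fourier (-(k i)) (x i)) := by
    refine (hg.ofReal).bdd_mul (c := 1) ((eprod_continuous k).aestronglyMeasurable) ?_ |>.congr ?_
    · exact Filter.Eventually.of_forall fun x => le_of_eq (eprod_norm k x)
    · exact Filter.Eventually.of_forall fun x => mul_comm _ _
  have h2 : Integrable (fun x : Torus n => (δ : ℂ) * ∏ i, fourier (-(k i)) (x i)) :=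
    (eprod_integrable k).const_mul _
  have heq : (fun x : Torus n => ((g x + δ : ℝ) : ℂ) * ∏ i, fourier (-(k i)) (x i))
      = fun x => (g x : ℂ) * ∏ i, fourier (-(k i)) (x i)
        + (δ : ℂ) * ∏ i, fourier (-(k i)) (x i) := by
    funext x; push_cast; ring
  rw [heq, integral_add h1 h2]
  have h3 : (∫ x : Torus n, (δ : ℂ) * ∏ i, fourier (-(k i)) (x i))
      = (δ:ℂ) * fCoeff (fun _ => (1:ℝ)) k := by
    unfold fCoeff
    rw [integral_const_mul]
    simp
  rw [h3, fCoeff_const (1:ℝ) hk]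
  simp

lemma knorm_zero {n : ℕ} : knorm (0 : Fin n → ℤ) = 0 := by
  unfold knorm; simp

lemma h12_term_add_const {n : ℕ} {g : Torus n → ℝ} (hg : Integrable g) (δ : ℝ) :
    (fun k : Fin n → ℤ => knorm k * ‖fCoeff (fun x => g x + δ) k‖ ^ 2)
      = fun k => knorm k * ‖fCoeff g k‖ ^ 2 := by
  funext k
  by_cases hk : k = 0
  · subst hk; rw [knorm_zero]; simp
  · rw [fCoeff_add_const hg δ hk]

lemma supNorm_nonneg {n : ℕ} (φ : Torus n → ℝ → ℝ) : 0 ≤ supNorm φ :=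
  Real.iSup_nonneg fun p => abs_nonneg _

lemma abs_le_supNorm {n : ℕ} {φ : Torus n → ℝ → ℝ} {L : NNReal}
    (hL : LipschitzWith L (Function.uncurry φ)) (hper : ∀ x y, φ x (y + 1) = φ x y)
    (x : Torus n) (y : ℝ) : |φ x y| ≤ supNorm φ := by
  have cont : Continuous (Function.uncurry φ) := hL.continuous
  have hK : IsCompact ((Set.univ : Set (Torus n)) ×ˢ Set.Icc (0:ℝ) 1) :=
    isCompact_univ.prod isCompact_Icc
  obtain ⟨C, hC⟩ := hK.exists_bound_of_continuousOn cont.continuousOn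
  have key : ∀ p : Torus n × ℝ, |φ p.1 p.2| ≤ C := by
    rintro ⟨a, b⟩
    have hper' : Function.Periodic (φ a) 1 := fun y => hper a y
    have h1 : φ a (Int.fract b) = φ a b := by
      have := hper'.sub_int_mul_eq (x := b) ⌊b⌋
      rw [mul_one] at this
      rwa [Int.self_sub_floor] at this
    have h2 : (a, Int.fract b) ∈ (Set.univ : Set (Torus n)) ×ˢ Set.Icc (0:ℝ) 1 :=
      ⟨Set.mem_univ _, Int.fract_nonneg b, (Int.fract_lt_one b).le⟩
    calc |φ a b| = ‖Function.uncurry φ (a, Int.fract b)‖ := by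
          simp [Function.uncurry, h1, Real.norm_eq_abs]
      _ ≤ C := hC _ h2
  have bdd : BddAbove (Set.range fun p : Torus n × ℝ => |φ p.1 p.2|) :=
    ⟨C, by rintro _ ⟨p, rfl⟩; exact key p⟩
  exact le_ciSup bdd (x, y)

/-- Shifting a competitor by a constant `δ`. -/
lemma shift_competitor {n : ℕ} {φ : Torus n → ℝ → ℝ} {L : NNReal}
    (hL : LipschitzWith L (Function.uncurry φ)) (hper : ∀ x y, φ x (y + 1) = φ x y)
    {g : Torus n → ℝ} (hg2 : MemLp g 2 (volume : Measure (Torus n)))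
    (hfin : H12Finite g) (δ : ℝ) :
    MemLp (fun x => g x + δ) 2 (volume : Measure (Torus n)) ∧
    H12Finite (fun x => g x + δ) ∧
    (∫ x : Torus n, (g x + δ)) = (∫ x : Torus n, g x) + δ ∧
    energyE φ (fun x => g x + δ) ≤ energyE φ g + supNorm φ * |δ| := by
  have hgi : Integrable g (volume : Measure (Torus n)) := hg2.integrable one_le_two
  have hmem : MemLp (fun x => g x + δ) 2 (volume : Measure (Torus n)) := by
    exact hg2.add (memLp_const δ)
  have hfin' : H12Finite (fun x => g x + δ) := by
    unfold H12Finite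
    rw [h12_term_add_const hgi δ]
    exact hfin
  have hint : (∫ x : Torus n, (g x + δ)) = (∫ x : Torus n, g x) + δ := by
    rw [integral_add hgi (integrable_const δ), integral_const]
    simp
  refine ⟨hmem, hfin', hint, ?_⟩
  -- energies
  have hH12 : H12SeminormSq (fun x => g x + δ) = H12SeminormSq g := by
    unfold H12SeminormSq
    rw [h12_term_add_const hgi δ]
  set M := supNorm φ with hM
  have hφb : ∀ x y, |φ x y| ≤ M := abs_le_supNorm hL hper
  have hφc : ∀ x : Torus n, Continuous (φ x) := fun x =>
    hL.continuous.comp (Continuous.prodMk_right x)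
  -- the primitive function and its continuity
  have Φcont : Continuous (fun p : Torus n × ℝ => ∫ t in (0:ℝ)..p.2, φ p.1 t) :=
    intervalIntegral.continuous_parametric_primitive_of_continuous hL.continuous
  set A : Torus n → ℝ := fun x => ∫ γ in (0:ℝ)..(g x), φ x γ with hA
  set B : Torus n → ℝ := fun x => ∫ γ in (g x)..(g x + δ), φ x γ with hB
  have hsplit : ∀ x : Torus n, (∫ γ in (0:ℝ)..(g x + δ), φ x γ) = A x + B x := by
    intro x
    exact (intervalIntegral.integral_add_adjacent_intervals
      ((hφc x).intervalIntegrable _ _) ((hφc x).intervalIntegrable _ _)).symm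
  have hgA : AEStronglyMeasurable (fun x : Torus n => (x, g x))
      (volume : Measure (Torus n)) :=
    aestronglyMeasurable_id.prodMk hg2.aestronglyMeasurable
  have hgA' : AEStronglyMeasurable (fun x : Torus n => (x, g x + δ))
      (volume : Measure (Torus n)) :=
    aestronglyMeasurable_id.prodMk (hg2.aestronglyMeasurable.add aestronglyMeasurable_const)
  have hAm : AEStronglyMeasurable A (volume : Measure (Torus n)) := by
    have h : AEStronglyMeasurable
        ((fun p : Torus n × ℝ => ∫ t in (0:ℝ)..p.2, φ p.1 t) ∘ (fun x : Torus n => (x, g x)))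
        (volume : Measure (Torus n)) := Φcont.comp_aestronglyMeasurable hgA
    exact h
  have hA'm : AEStronglyMeasurable (fun x : Torus n => ∫ γ in (0:ℝ)..(g x + δ), φ x γ)
      (volume : Measure (Torus n)) := by
    have h : AEStronglyMeasurable
        ((fun p : Torus n × ℝ => ∫ t in (0:ℝ)..p.2, φ p.1 t) ∘ (fun x : Torus n => (x, g x + δ)))
        (volume : Measure (Torus n)) := Φcont.comp_aestronglyMeasurable hgA'
    exact h
  have hBm : AEStronglyMeasurable B (volume : Measure (Torus n)) := by
    have : B = fun x : Torus n =>
        (∫ γ in (0:ℝ)..(g x + δ), φ x γ) - ∫ γ in (0:ℝ)..(g x), φ x γ := by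
      funext x
      rw [hsplit x, show (∫ γ in (0:ℝ)..(g x), φ x γ) = A x from rfl]
      ring
    rw [this]
    exact hA'm.sub hAm
  have hAbound : ∀ x : Torus n, ‖A x‖ ≤ M * |g x| := by
    intro x
    have := intervalIntegral.norm_integral_le_of_norm_le_const
      (C := M) (f := φ x) (a := (0:ℝ)) (b := g x)
      (fun t _ => by rw [Real.norm_eq_abs]; exact hφb x t)
    simpa using this
  have hAi : Integrable A (volume : Measure (Torus n)) := by
    refine (hgi.norm.const_mul M).mono' hAm ?_
    exact Filter.Eventually.of_forall fun x => by
      simpa [Real.norm_eq_abs] using hAbound x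
  have hBbound : ∀ x : Torus n, ‖B x‖ ≤ M * |δ| := by
    intro x
    have := intervalIntegral.norm_integral_le_of_norm_le_const
      (C := M) (f := φ x) (a := g x) (b := g x + δ)
      (fun t _ => by rw [Real.norm_eq_abs]; exact hφb x t)
    simpa using this
  have hBi : Integrable B (volume : Measure (Torus n)) := by
    refine (integrable_const (M * |δ|)).mono' hBm ?_
    exact Filter.Eventually.of_forall hBbound
  have hintB : |∫ x : Torus n, B x| ≤ M * |δ| := by
    rw [← Real.norm_eq_abs]
    calc ‖∫ x : Torus n, B x‖ ≤ ∫ x : Torus n, ‖B x‖ := norm_integral_le_integral_norm B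
      _ ≤ ∫ _x : Torus n, M * |δ| :=
          integral_mono hBi.norm (integrable_const _) hBbound
      _ = M * |δ| := by rw [integral_const]; simp
  have hsum : (∫ x : Torus n, ∫ γ in (0:ℝ)..(g x + δ), φ x γ)
      = (∫ x : Torus n, A x) + ∫ x : Torus n, B x := by
    rw [← integral_add hAi hBi]
    exact integral_congr_ae (Filter.Eventually.of_forall hsplit)
  unfold energyE
  rw [hH12, hsum, hA]
  have : -(∫ x : Torus n, B x) ≤ M * |δ| := by
    have := (abs_le.1 hintB).1
    linarith
  linarith

/-- One-sided Lipschitz estimate for `Gmin`. -/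
lemma Gmin_step {n : ℕ} {φ : Torus n → ℝ → ℝ} {L : NNReal}
    (hL : LipschitzWith L (Function.uncurry φ)) (hper : ∀ x y, φ x (y + 1) = φ x y)
    (c δ : ℝ) : Gmin φ (c + δ) ≤ Gmin φ c + supNorm φ * |δ| := by
  classical
  set S : ℝ → Set ℝ := fun c => {e : ℝ | ∃ g : Torus n → ℝ,
    MemLp g 2 (volume : Measure (Torus n)) ∧
    H12Finite g ∧ (∫ x : Torus n, g x) = c ∧ energyE φ g = e} with hS
  have hGS : ∀ c, Gmin φ c = sInf (S c) := fun _ => rfl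
  have hMnn : 0 ≤ supNorm φ := supNorm_nonneg φ
  -- the constant function gives nonemptiness
  have hne : ∀ c : ℝ, (S c).Nonempty := by
    intro c
    refine ⟨energyE φ (fun _ => c), (fun _ => c), memLp_const c, ?_, by simp, rfl⟩
    unfold H12Finite
    have : (fun k : Fin n → ℤ => knorm k * ‖fCoeff (fun _ : Torus n => c) k‖ ^ 2)
        = fun _ => 0 := by
      funext k
      by_cases hk : k = 0
      · subst hk; rw [knorm_zero]; simp
      · rw [fCoeff_const c hk]; simp
    rw [this]
    exact summable_zero
  -- the shift map
  have hkey : ∀ (c δ : ℝ), ∀ e ∈ S c, ∃ e' ∈ S (c + δ), e' ≤ e + supNorm φ * |δ| := by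
    rintro c δ e ⟨g, hg2, hfin, hint, rfl⟩
    obtain ⟨h1, h2, h3, h4⟩ := shift_competitor hL hper hg2 hfin δ
    exact ⟨energyE φ (fun x => g x + δ), ⟨fun x => g x + δ, h1, h2, by rw [h3, hint], rfl⟩, h4⟩
  by_cases hbdd : BddBelow (S c)
  · -- then S (c + δ) is bounded below too
    obtain ⟨b, hb⟩ := hbdd
    have hbdd' : BddBelow (S (c + δ)) := by
      refine ⟨b - supNorm φ * |δ|, fun e' he' => ?_⟩
      obtain ⟨e'', he''mem, he''⟩ := hkey (c + δ) (-δ) e' he'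
      rw [abs_neg] at he''
      have : b ≤ e'' := hb (by simpa using he''mem)
      linarith
    rw [hGS, hGS]
    have h1 : ∀ e ∈ S c, sInf (S (c + δ)) - supNorm φ * |δ| ≤ e := by
      intro e he
      obtain ⟨e', he'mem, he'⟩ := hkey c δ e he
      have := csInf_le hbdd' he'mem
      linarith
    have := le_csInf (hne c) h1
    linarith
  · -- both sets are unbounded below, so both infima are the junk value 0
    have hbdd' : ¬ BddBelow (S (c + δ)) := by
      intro hb
      obtain ⟨b, hb⟩ := hb
      apply hbdd
      refine ⟨b - supNorm φ * |δ|, fun e he => ?_⟩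
      obtain ⟨e', he'mem, he'⟩ := hkey c δ e he
      have : b ≤ e' := hb he'mem
      linarith
    rw [hGS, hGS, Real.sInf_of_not_bddBelow hbdd, Real.sInf_of_not_bddBelow hbdd']
    nlinarith [abs_nonneg δ]

/-- Under Hypothesis (H), the constrained minimal energy `G` is Lipschitz
continuous with constant `‖φ‖_{L^∞}`. -/
theorem Gmin_lipschitz {n : ℕ} (hn : 1 ≤ n) (φ : Torus n → ℝ → ℝ) (hφ : HypH φ)
    (c₁ c₂ : ℝ) : |Gmin φ c₁ - Gmin φ c₂| ≤ supNorm φ * |c₁ - c₂| := by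
  obtain ⟨⟨L, hL⟩, hper, _⟩ := hφ
  rw [abs_sub_le_iff]
  constructor
  · have := Gmin_step (n := n) hL hper c₂ (c₁ - c₂)
    rw [add_sub_cancel] at this
    linarith
  · have := Gmin_step (n := n) hL hper c₁ (c₂ - c₁)
    rw [add_sub_cancel] at this
    rw [show |c₂ - c₁| = |c₁ - c₂| from abs_sub_comm c₂ c₁] at this
    linarith
end
end

section
/- Let φ : ℝ → ℝ be Lipschitz continuous and 1-periodic, and let F ∈ ℝ satisfy −max φ ≤ F ≤ −min φ. Then every differentiable solution g : ℝ → ℝ of g'(t) = F + φ(g(t)) satisfies |g(t) − g(0)| ≤ 1 for all t ∈ ℝ; i.e., the interface is stuck (pinned) and its average velocity is zero. -/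
open Real

private lemma eq_const_of_root {v : ℝ → ℝ} {K : NNReal} (hv : LipschitzWith K v)
    {c : ℝ} (hc : v c = 0) {g : ℝ → ℝ} (hg : ∀ t, HasDerivAt g (v (g t)) t)
    {t₀ : ℝ} (h0 : g t₀ = c) (t : ℝ) : g t = c := by
  have ha : min t₀ t - 1 < t₀ := by
    have := min_le_left t₀ t; linarith
  have hb : t₀ < max t₀ t + 1 := by
    have := le_max_left t₀ t; linarith
  have key : Set.EqOn g (fun _ => c) (Set.Icc (min t₀ t - 1) (max t₀ t + 1)) := by
    apply ODE_solution_unique_of_mem_Icc (v := fun _ x => v x) (s := fun _ => Set.univ)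
      (fun _ _ => hv.lipschitzOnWith) ⟨ha, hb⟩
    · exact fun s hs => (hg s).continuousAt.continuousWithinAt
    · exact fun s _ => hg s
    · exact fun _ _ => Set.mem_univ _
    · exact continuousOn_const
    · intro s _
      simpa [hc] using hasDerivAt_const s c
    · exact fun _ _ => Set.mem_univ _
    · exact h0
  exact key ⟨by have := min_le_right t₀ t; linarith, by have := le_max_right t₀ t; linarith⟩

private lemma exists_root_in {φ : ℝ → ℝ} {L : NNReal} (hφl : LipschitzWith L φ)
    (hφp : Function.Periodic φ 1) {F : ℝ}
    (hF₁ : -sSup (Set.range φ) ≤ F) (hF₂ : F ≤ -sInf (Set.range φ)) (x : ℝ) :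
    ∃ c ∈ Set.Icc x (x + 1), F + φ c = 0 := by
  have hcont : Continuous φ := hφl.continuous
  have hrange : Set.range φ ⊆ φ '' Set.Icc x (x + 1) := by
    rintro _ ⟨y, rfl⟩
    refine ⟨y + ⌈x - y⌉, ⟨?_, ?_⟩, ?_⟩
    · have := Int.le_ceil (x - y); linarith
    · have := Int.ceil_lt_add_one (x - y); linarith
    · simpa using (hφp.int_mul (⌈x - y⌉)) y
  have hcomp : IsCompact (Set.Icc x (x + 1)) := isCompact_Icc
  have hne : (Set.Icc x (x + 1)).Nonempty := ⟨x, ⟨le_refl x, by linarith⟩⟩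
  obtain ⟨m, hm, hmax⟩ := hcomp.exists_isMaxOn hne hcont.continuousOn
  obtain ⟨m', hm', hmin⟩ := hcomp.exists_isMinOn hne hcont.continuousOn
  have hgreat : IsGreatest (Set.range φ) (φ m) := by
    constructor
    · exact Set.mem_range_self m
    · intro y hy
      obtain ⟨z, hz, rfl⟩ := hrange hy
      exact hmax hz
  have hleast : IsLeast (Set.range φ) (φ m') := by
    constructor
    · exact Set.mem_range_self m'
    · intro y hy
      obtain ⟨z, hz, rfl⟩ := hrange hy
      exact hmin hz
  have hsup : sSup (Set.range φ) = φ m := hgreat.csSup_eq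
  have hinf : sInf (Set.range φ) = φ m' := hleast.csInf_eq
  have h1 : φ m' ≤ -F := by rw [← hinf]; linarith
  have h2 : -F ≤ φ m := by rw [← hsup]; linarith
  have hmem : -F ∈ Set.uIcc (φ m') (φ m) := Set.mem_uIcc.2 (Or.inl ⟨h1, h2⟩)
  obtain ⟨c, hc, hcF⟩ := intermediate_value_uIcc (hcont.continuousOn (s := Set.uIcc m' m)) hmem
  refine ⟨c, ?_, by linarith [hcF.symm ▸ (rfl : φ c = φ c)] ⟩
  have : Set.uIcc m' m ⊆ Set.Icc x (x + 1) := by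
    rw [Set.uIcc_eq_union]
    exact Set.union_subset (Set.Icc_subset_Icc hm'.1 hm.2) (Set.Icc_subset_Icc hm.1 hm'.2)
  exact this hc

/-- for the one-dimensional ODE model `ġ = F + φ(g)` with `φ` Lipschitz and
1-periodic, if `-max φ ≤ F ≤ -min φ` then every solution stays within distance 1 of its
initial value: the interface is pinned and its average velocity is zero. -/
theorem ode_pinned (φ : ℝ → ℝ) (L : NNReal) (hφl : LipschitzWith L φ)
    (hφp : Function.Periodic φ 1) (F : ℝ)
    (hF₁ : -sSup (Set.range φ) ≤ F) (hF₂ : F ≤ -sInf (Set.range φ))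
    (g : ℝ → ℝ) (hg : ∀ t, HasDerivAt g (F + φ (g t)) t) :
    ∀ t : ℝ, |g t - g 0| ≤ 1 := by
  have hv : LipschitzWith L (fun x => F + φ x) := fun x y => by
    simpa [edist_add_left] using hφl x y
  obtain ⟨a, ha, haroot⟩ := exists_root_in hφl hφp hF₁ hF₂ (g 0 - 1)
  obtain ⟨b, hb, hbroot⟩ := exists_root_in hφl hφp hF₁ hF₂ (g 0)
  have ha2 : a ≤ g 0 := by have := ha.2; linarith
  have hgc : Continuous g := by
    apply continuous_iff_continuousAt.2
    exact fun t => (hg t).continuousAt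
  have hlow : ∀ t, a ≤ g t := by
    intro t
    by_contra h
    push_neg at h
    have hmemI : a ∈ Set.uIcc (g 0) (g t) := Set.mem_uIcc.2 (Or.inr ⟨le_of_lt h, ha2⟩)
    have hsub : Set.uIcc (g 0) (g t) ⊆ g '' Set.uIcc 0 t :=
      intermediate_value_uIcc hgc.continuousOn
    obtain ⟨s, _, hs⟩ := hsub hmemI
    have := eq_const_of_root hv haroot hg hs t
    exact absurd this (ne_of_lt h)
  have hhigh : ∀ t, g t ≤ b := by
    intro t
    by_contra h
    push_neg at h
    have hmemI : b ∈ Set.uIcc (g 0) (g t) := Set.mem_uIcc.2 (Or.inl ⟨hb.1, le_of_lt h⟩)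
    have hsub : Set.uIcc (g 0) (g t) ⊆ g '' Set.uIcc 0 t :=
      intermediate_value_uIcc hgc.continuousOn
    obtain ⟨s, _, hs⟩ := hsub hmemI
    have := eq_const_of_root hv hbroot hg hs t
    exact absurd this (ne_of_gt h)
  intro t
  rw [abs_le]
  constructor
  · have := hlow t; have := ha.1; linarith
  · have := hhigh t; have := hb.2; linarith
end

section
/- Let φ : ℝ → ℝ be twice continuously differentiable and 1-periodic, attaining its minimum on [0,1) at a unique point g₀ with φ''(g₀) > 0, and set F_c = −min φ. For F > F_c define v̄(F) = (∫_0^1 dγ/(F + φ(γ)))⁻¹. Then v̄(F)/√(F − F_c) → √(φ''(g₀)/2)/π as F → F_c from above; i.e., the effective velocity scales as the square root of the excess force above the depinning threshold. -/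
open Real Filter

lemma aux_uIcc_abs {g t y : ℝ} (hy : y ∈ Set.uIcc g t) : |y - g| ≤ |t - g| := by
  rcases le_total g t with h | h
  · rw [Set.uIcc_of_le h] at hy
    obtain ⟨h1, h2⟩ := hy
    rw [abs_of_nonneg (by linarith), abs_of_nonneg (by linarith)]
    linarith
  · rw [Set.uIcc_of_ge h] at hy
    obtain ⟨h1, h2⟩ := hy
    rw [abs_of_nonpos (by linarith), abs_of_nonpos (by linarith)]
    linarith

lemma aux_model_integral_tendsto (c r : ℝ) (hc : 0 < c) (hr : 0 < r) :
    Tendsto (fun ε : ℝ => Real.sqrt ε * ∫ x in (-r)..r, 1 / (ε + c * x ^ 2))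
      (nhdsWithin 0 (Set.Ioi 0)) (nhds (π / Real.sqrt c)) := by
  have hsc : 0 < Real.sqrt c := Real.sqrt_pos.2 hc
  have key : ∀ ε : ℝ, 0 < ε →
      Real.sqrt ε * ∫ x in (-r)..r, 1 / (ε + c * x ^ 2)
        = 2 / Real.sqrt c * arctan (Real.sqrt c * r / Real.sqrt ε) := by
    intro ε hε
    have hse : 0 < Real.sqrt ε := Real.sqrt_pos.2 hε
    set k := Real.sqrt c / Real.sqrt ε with hk
    have hkpos : 0 < k := div_pos hsc hse
    have hεk : ε * k ^ 2 = c := by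
      rw [hk, div_pow, Real.sq_sqrt hc.le, Real.sq_sqrt hε.le]
      field_simp
    have hint : ∀ x : ℝ, 1 / (ε + c * x ^ 2) = ε⁻¹ * (1 / (1 + (k * x) ^ 2)) := by
      intro x
      have h1 : ε * (1 + (k * x) ^ 2) = ε + c * x ^ 2 := by
        calc ε * (1 + (k * x) ^ 2) = ε + (ε * k ^ 2) * x ^ 2 := by ring
        _ = ε + c * x ^ 2 := by rw [hεk]
      have hx : (1 + (k * x) ^ 2) ≠ 0 := by positivity
      rw [← h1]
      field_simp
    have h2 : ∫ x in (-r)..r, 1 / (ε + c * x ^ 2)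
        = ε⁻¹ * ∫ x in (-r)..r, 1 / (1 + (k * x) ^ 2) := by
      simp_rw [hint]
      exact intervalIntegral.integral_const_mul _ _
    rw [h2, intervalIntegral.integral_comp_mul_left (fun y => 1 / (1 + y ^ 2)) hkpos.ne']
    rw [integral_one_div_one_add_sq, smul_eq_mul]
    have h3 : arctan (k * -r) = -arctan (k * r) := by rw [mul_neg, arctan_neg]
    rw [h3]
    have h4 : Real.sqrt c * r / Real.sqrt ε = k * r := by rw [hk]; ring
    rw [h4]
    have hε' : Real.sqrt ε * Real.sqrt ε = ε := Real.mul_self_sqrt hε.le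
    have h7 : Real.sqrt ε * ε⁻¹ * k⁻¹ = (Real.sqrt c)⁻¹ := by
      rw [hk, ← hε']
      field_simp
      rw [Real.sqrt_sq hse.le]
    linear_combination (2 * arctan (k * r)) * h7
  have harct : Tendsto (fun ε : ℝ => 2 / Real.sqrt c * arctan (Real.sqrt c * r / Real.sqrt ε))
      (nhdsWithin 0 (Set.Ioi 0)) (nhds (π / Real.sqrt c)) := by
    have hsqrt : Tendsto (fun ε : ℝ => Real.sqrt ε) (nhdsWithin 0 (Set.Ioi 0))
        (nhdsWithin 0 (Set.Ioi 0)) := by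
      rw [tendsto_nhdsWithin_iff]
      constructor
      · have := (Real.continuous_sqrt.tendsto 0).mono_left
          (nhdsWithin_le_nhds (s := Set.Ioi (0:ℝ)))
        simpa using this
      · exact eventually_mem_nhdsWithin.mono fun x hx => Real.sqrt_pos.2 hx
    have hinv : Tendsto (fun ε : ℝ => (Real.sqrt ε)⁻¹) (nhdsWithin 0 (Set.Ioi 0)) atTop :=
      tendsto_inv_nhdsGT_zero.comp hsqrt
    have hdiv : Tendsto (fun ε : ℝ => Real.sqrt c * r / Real.sqrt ε)
        (nhdsWithin 0 (Set.Ioi 0)) atTop := by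
      simp_rw [div_eq_mul_inv]
      exact hinv.const_mul_atTop (by positivity)
    have harc : Tendsto (fun ε : ℝ => arctan (Real.sqrt c * r / Real.sqrt ε))
        (nhdsWithin 0 (Set.Ioi 0)) (nhds (π / 2)) :=
      (Real.tendsto_arctan_atTop.mono_right nhdsWithin_le_nhds).comp hdiv
    have := harc.const_mul (2 / Real.sqrt c)
    have heq : 2 / Real.sqrt c * (π / 2) = π / Real.sqrt c := by
      field_simp
    rwa [heq] at this
  exact harct.congr' (eventually_mem_nhdsWithin.mono fun ε hε => (key ε hε).symm)

set_option maxHeartbeats 1000000 in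
/-- square-root depinning law for the ODE model: if `φ` is `C²`,
1-periodic, attains its minimum on `[0,1)` at the unique point `g₀` with `φ''(g₀) > 0`,
and `F_c = -min φ`, then the average velocity `v̄(F) = (∫_0^1 dγ/(F+φ(γ)))⁻¹` satisfies
`v̄(F)/√(F - F_c) → √(φ''(g₀)/2)/π` as `F → F_c⁺`. -/
theorem ode_sqrt_depinning (φ : ℝ → ℝ) (hφ : ContDiff ℝ 2 φ)
    (hφp : Function.Periodic φ 1)
    (g₀ : ℝ) (hg₀ : g₀ ∈ Set.Ico (0:ℝ) 1)
    (hmin : ∀ γ : ℝ, φ g₀ ≤ φ γ)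
    (huniq : ∀ γ ∈ Set.Ico (0:ℝ) 1, φ γ = φ g₀ → γ = g₀)
    (hnondeg : 0 < deriv (deriv φ) g₀)
    (Fc : ℝ) (hFc : Fc = -φ g₀)
    (v : ℝ → ℝ) (hv : ∀ F : ℝ, v F = (∫ γ in (0:ℝ)..1, 1 / (F + φ γ))⁻¹) :
    Tendsto (fun F : ℝ => v F / Real.sqrt (F - Fc))
      (nhdsWithin Fc (Set.Ioi Fc))
      (nhds (Real.sqrt (deriv (deriv φ) g₀ / 2) / π)) := by
  set a := deriv (deriv φ) g₀ with ha
  set L := π / Real.sqrt (a / 2) with hL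
  -- basic regularity
  have h2 : ContDiff ℝ ((1:WithTop ℕ∞)+1) φ := by norm_num; exact hφ
  have hC1 : ContDiff ℝ 1 (deriv φ) := (contDiff_succ_iff_deriv.mp h2).2.2
  have hd1 : Differentiable ℝ φ := (contDiff_succ_iff_deriv.mp h2).1
  have hd2 : Differentiable ℝ (deriv φ) := hC1.differentiable one_ne_zero
  have hcp : Continuous (deriv φ) := hd2.continuous
  have hcq : Continuous (deriv (deriv φ)) := hC1.continuous_deriv le_rfl
  have hcφ : Continuous φ := hd1.continuous
  have hp0 : deriv φ g₀ = 0 := IsLocalMin.deriv_eq_zero (Filter.Eventually.of_forall hmin)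
  -- strict positivity away from the minimum
  have hψpos : ∀ γ : ℝ, |γ - g₀| ≤ 1/2 → γ ≠ g₀ → φ g₀ < φ γ := by
    intro γ h12 hne
    rcases lt_or_eq_of_le (hmin γ) with h | h
    · exact h
    · exfalso
      have hfr : φ (Int.fract γ) = φ γ := by
        rw [Int.fract]
        have := hφp.sub_zsmul_eq ⌊γ⌋ (x := γ)
        simpa using this
      have hmem : Int.fract γ ∈ Set.Ico (0:ℝ) 1 := ⟨Int.fract_nonneg γ, Int.fract_lt_one γ⟩
      have heq := huniq _ hmem (hfr.trans h.symm)
      have hn : γ - g₀ = (⌊γ⌋ : ℝ) := by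
        rw [← heq, Int.fract]; ring
      have hne0 : (⌊γ⌋ : ℝ) ≠ 0 := by
        rw [← hn]; exact sub_ne_zero.2 hne
      have h1le : (1:ℝ) ≤ |(⌊γ⌋ : ℝ)| := by
        have h' : ⌊γ⌋ ≠ 0 := by exact_mod_cast hne0
        exact_mod_cast Int.one_le_abs h'
      rw [← hn] at h1le
      linarith
  -- FTC facts
  have ftcφ : ∀ u w : ℝ, ∫ y in u..w, deriv φ y = φ w - φ u := fun u w =>
    intervalIntegral.integral_deriv_eq_sub (fun x _ => hd1.differentiableAt)
      (hcp.intervalIntegrable u w)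
  have ftcp : ∀ u w : ℝ, ∫ y in u..w, deriv (deriv φ) y = deriv φ w - deriv φ u := fun u w =>
    intervalIntegral.integral_deriv_eq_sub (fun x _ => hd2.differentiableAt)
      (hcq.intervalIntegrable u w)
  -- Taylor-type two-sided bound
  have taylor : ∀ δ : ℝ, 0 < δ → ∃ r : ℝ, 0 < r ∧ r ≤ 1/4 ∧
      ∀ x : ℝ, |x| ≤ r → (a/2 - δ) * x^2 ≤ φ (g₀ + x) - φ g₀ ∧
        φ (g₀ + x) - φ g₀ ≤ (a/2 + δ) * x^2 := by
    intro δ hδ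
    obtain ⟨r₀, hr₀, hq⟩ := Metric.continuousAt_iff.mp hcq.continuousAt (δ/2) (by linarith)
    refine ⟨min (r₀/2) (1/4), by positivity, min_le_right _ _, ?_⟩
    set r := min (r₀/2) (1/4) with hr
    have hrr₀ : r < r₀ := lt_of_le_of_lt (min_le_left _ _) (by linarith)
    have hqb : ∀ y : ℝ, |y - g₀| ≤ r → |deriv (deriv φ) y - a| ≤ δ/2 := by
      intro y hy
      have := hq (show dist y g₀ < r₀ by rw [Real.dist_eq]; linarith)
      rw [Real.dist_eq] at this
      exact this.le
    -- first-order bound on deriv φ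
    have hpb : ∀ t : ℝ, |t - g₀| ≤ r → |deriv φ t - a * (t - g₀)| ≤ δ/2 * |t - g₀| := by
      intro t ht
      have hint : ∫ y in g₀..t, (deriv (deriv φ) y - a) = deriv φ t - a * (t - g₀) := by
        rw [intervalIntegral.integral_sub (hcq.intervalIntegrable _ _)
          intervalIntegrable_const, ftcp, intervalIntegral.integral_const, hp0]
        simp only [smul_eq_mul]; ring
      have hb := intervalIntegral.norm_integral_le_of_norm_le_const
        (f := fun y => deriv (deriv φ) y - a) (a := g₀) (b := t) (C := δ/2) ?_
      · rw [hint, Real.norm_eq_abs] at hb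
        exact hb
      · intro y hy
        have hy' : |y - g₀| ≤ |t - g₀| := aux_uIcc_abs (Set.uIoc_subset_uIcc hy)
        rw [Real.norm_eq_abs]
        exact hqb y (le_trans hy' ht)
    -- second-order bound on φ
    intro x hx
    have hxr : |(g₀ + x) - g₀| ≤ r := by
      simpa using hx
    have hint2 : ∫ s in g₀..(g₀+x), (deriv φ s - a * (s - g₀))
        = (φ (g₀+x) - φ g₀) - a * x^2 / 2 := by
      have hlin : ∫ s in g₀..(g₀+x), a * (s - g₀) = a * x^2 / 2 := by
        have h1 : ∫ s in g₀..(g₀+x), (s - g₀) = ∫ y in (g₀-g₀)..(g₀+x-g₀), y :=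
          intervalIntegral.integral_comp_sub_right (fun y => y) g₀
        have h2 : ∫ s in g₀..(g₀+x), a * (s - g₀) = a * ∫ s in g₀..(g₀+x), (s - g₀) :=
          intervalIntegral.integral_const_mul a _
        rw [h2, h1]
        rw [show g₀ - g₀ = (0:ℝ) by ring, show g₀ + x - g₀ = x by ring, integral_id]
        ring
      rw [intervalIntegral.integral_sub (f := fun s => deriv φ s) (g := fun s => a * (s - g₀))
        (hcp.intervalIntegrable _ _)
        ((continuous_const.mul (continuous_sub_right g₀)).intervalIntegrable _ _),
        ftcφ, hlin]
    have hb2 := intervalIntegral.norm_integral_le_of_norm_le_const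
      (f := fun s => deriv φ s - a * (s - g₀)) (a := g₀) (b := g₀+x) (C := δ/2 * |x|) ?_
    · rw [hint2, Real.norm_eq_abs, show g₀ + x - g₀ = x by ring] at hb2
      have habs : |x| * |x| = x^2 := by rw [← abs_mul, abs_mul_self]; ring
      have hb3 : |(φ (g₀+x) - φ g₀) - a * x^2/2| ≤ δ/2 * x^2 := by
        calc |(φ (g₀+x) - φ g₀) - a * x^2/2| ≤ δ/2 * |x| * |x| := hb2
        _ = δ/2 * x^2 := by rw [mul_assoc, habs]
      obtain ⟨hb4, hb5⟩ := abs_le.mp hb3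
      constructor <;> nlinarith [sq_nonneg x, hδ.le]
    · intro s hs
      have hs' : |s - g₀| ≤ |g₀ + x - g₀| := aux_uIcc_abs (Set.uIoc_subset_uIcc hs)
      rw [show g₀ + x - g₀ = x by ring] at hs'
      rw [Real.norm_eq_abs]
      calc |deriv φ s - a * (s - g₀)| ≤ δ/2 * |s - g₀| := hpb s (le_trans hs' hx)
      _ ≤ δ/2 * |x| := by
        apply mul_le_mul_of_nonneg_left hs' (by linarith)
  -- two-sided bounds on the full integral
  have bounds : ∀ δ : ℝ, 0 < δ → δ < a/2 → ∃ r m : ℝ, 0 < r ∧ r ≤ 1/4 ∧ 0 < m ∧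
      ∀ F : ℝ, Fc < F →
        (∫ x in (-r)..r, 1 / ((F - Fc) + (a/2 + δ) * x ^ 2))
            ≤ (∫ γ in (0:ℝ)..1, 1 / (F + φ γ)) ∧
        (∫ γ in (0:ℝ)..1, 1 / (F + φ γ))
            ≤ (∫ x in (-r)..r, 1 / ((F - Fc) + (a/2 - δ) * x ^ 2)) + m⁻¹ := by
    intro δ hδ hδa
    obtain ⟨r, hr, hr4, htay⟩ := taylor δ hδ
    -- positive minimum on the outer regions
    obtain ⟨x₁, hx₁mem, hx₁min⟩ := isCompact_Icc.exists_isMinOn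
      (Set.nonempty_Icc.2 (by linarith : g₀ - 1/2 ≤ g₀ - r)) hcφ.continuousOn
    obtain ⟨x₂, hx₂mem, hx₂min⟩ := isCompact_Icc.exists_isMinOn
      (Set.nonempty_Icc.2 (by linarith : g₀ + r ≤ g₀ + 1/2)) hcφ.continuousOn
    have hm1 : 0 < φ x₁ - φ g₀ := by
      have h1 : |x₁ - g₀| ≤ 1/2 := by
        obtain ⟨hu, hw⟩ := hx₁mem
        rw [abs_le]; constructor <;> linarith
      have h2 : x₁ ≠ g₀ := by
        obtain ⟨hu, hw⟩ := hx₁mem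
        intro hcon; rw [hcon] at hw; linarith
      linarith [hψpos x₁ h1 h2]
    have hm2 : 0 < φ x₂ - φ g₀ := by
      have h1 : |x₂ - g₀| ≤ 1/2 := by
        obtain ⟨hu, hw⟩ := hx₂mem
        rw [abs_le]; constructor <;> linarith
      have h2 : x₂ ≠ g₀ := by
        obtain ⟨hu, hw⟩ := hx₂mem
        intro hcon; rw [hcon] at hu; linarith
      linarith [hψpos x₂ h1 h2]
    set m := min (φ x₁ - φ g₀) (φ x₂ - φ g₀) with hmdef
    have hmpos : 0 < m := lt_min hm1 hm2
    refine ⟨r, m, hr, hr4, hmpos, ?_⟩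
    intro F hF
    have hεpos : 0 < F - Fc := sub_pos.2 hF
    have hFφ : ∀ γ : ℝ, F + φ γ = (F - Fc) + (φ γ - φ g₀) := by
      intro γ; rw [hFc]; ring
    have hden : ∀ γ : ℝ, 0 < F + φ γ := by
      intro γ; rw [hFφ γ]
      have := hmin γ; linarith
    have hw : Continuous fun γ : ℝ => 1 / (F + φ γ) :=
      continuous_const.div (continuous_const.add hcφ) fun γ => (hden γ).ne'
    have hper : Function.Periodic (fun γ : ℝ => 1 / (F + φ γ)) 1 := fun x => by
      simp [hφp x]
    have hshift : ∫ γ in (0:ℝ)..1, 1 / (F + φ γ)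
        = ∫ γ in (g₀ - 1/2)..(g₀ + 1/2), 1 / (F + φ γ) := by
      have h0 := hper.intervalIntegral_add_eq 0 (g₀ - 1/2)
      rw [show g₀ - 1/2 + 1 = g₀ + 1/2 by ring] at h0
      simpa using h0
    have hii : ∀ u w : ℝ, IntervalIntegrable (fun γ : ℝ => 1 / (F + φ γ))
        MeasureTheory.volume u w := fun u w => hw.intervalIntegrable u w
    have hsplit2 := intervalIntegral.integral_add_adjacent_intervals
      (hii (g₀ - r) (g₀ + r)) (hii (g₀ + r) (g₀ + 1/2))
    have hsplit1 := intervalIntegral.integral_add_adjacent_intervals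
      (hii (g₀ - 1/2) (g₀ - r)) (hii (g₀ - r) (g₀ + 1/2))
    have hmid : ∫ γ in (g₀ - r)..(g₀ + r), 1 / (F + φ γ)
        = ∫ x in (-r)..r, 1 / (F + φ (g₀ + x)) := by
      have h' := intervalIntegral.integral_comp_add_left (a := -r) (b := r)
        (fun γ : ℝ => 1 / (F + φ γ)) g₀
      rw [show g₀ + -r = g₀ - r by ring] at h'
      exact h'.symm
    have hmodel : ∀ c : ℝ, 0 ≤ c → IntervalIntegrable
        (fun x : ℝ => 1 / ((F - Fc) + c * x ^ 2)) MeasureTheory.volume (-r) r := by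
      intro c hc
      apply Continuous.intervalIntegrable
      apply continuous_const.div
        (continuous_const.add (continuous_const.mul (continuous_pow 2)))
      intro x; show (F - Fc) + c * x ^ 2 ≠ 0; nlinarith [sq_nonneg x]
    have hmidcont : Continuous fun x : ℝ => 1 / (F + φ (g₀ + x)) :=
      continuous_const.div
        (continuous_const.add (hcφ.comp (continuous_const.add continuous_id)))
        fun x => (hden (g₀ + x)).ne'
    have hlow : ∫ x in (-r)..r, 1 / ((F - Fc) + (a/2 + δ) * x ^ 2)
        ≤ ∫ x in (-r)..r, 1 / (F + φ (g₀ + x)) := by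
      apply intervalIntegral.integral_mono_on (by linarith)
        (hmodel _ (by linarith)) (hmidcont.intervalIntegrable _ _)
      intro x hxm
      have hxr : |x| ≤ r := abs_le.2 ⟨hxm.1, hxm.2⟩
      obtain ⟨hψl, hψu⟩ := htay x hxr
      rw [hFφ (g₀ + x)]
      exact one_div_le_one_div_of_le (by nlinarith [sq_nonneg x]) (by linarith)
    have hup : ∫ x in (-r)..r, 1 / (F + φ (g₀ + x))
        ≤ ∫ x in (-r)..r, 1 / ((F - Fc) + (a/2 - δ) * x ^ 2) := by
      apply intervalIntegral.integral_mono_on (by linarith)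
        (hmidcont.intervalIntegrable _ _) (hmodel _ (by linarith))
      intro x hxm
      have hxr : |x| ≤ r := abs_le.2 ⟨hxm.1, hxm.2⟩
      obtain ⟨hψl, hψu⟩ := htay x hxr
      rw [hFφ (g₀ + x)]
      exact one_div_le_one_div_of_le (by nlinarith [sq_nonneg x]) (by linarith)
    have hptw1 : ∀ u ∈ Set.Icc (g₀ - 1/2) (g₀ - r), 1 / (F + φ u) ≤ m⁻¹ := by
      intro u hu
      have hmu : m ≤ φ u - φ g₀ := by
        have h0 : φ x₁ ≤ φ u := isMinOn_iff.mp hx₁min u hu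
        have h' : m ≤ φ x₁ - φ g₀ := min_le_left _ _
        linarith
      have hFu : m ≤ F + φ u := by rw [hFφ u]; linarith
      calc 1 / (F + φ u) ≤ 1 / m := one_div_le_one_div_of_le hmpos hFu
      _ = m⁻¹ := one_div m
    have hptw2 : ∀ u ∈ Set.Icc (g₀ + r) (g₀ + 1/2), 1 / (F + φ u) ≤ m⁻¹ := by
      intro u hu
      have hmu : m ≤ φ u - φ g₀ := by
        have h0 : φ x₂ ≤ φ u := isMinOn_iff.mp hx₂min u hu
        have h' : m ≤ φ x₂ - φ g₀ := min_le_right _ _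
        linarith
      have hFu : m ≤ F + φ u := by rw [hFφ u]; linarith
      calc 1 / (F + φ u) ≤ 1 / m := one_div_le_one_div_of_le hmpos hFu
      _ = m⁻¹ := one_div m
    have hout1pos : 0 ≤ ∫ γ in (g₀ - 1/2)..(g₀ - r), 1 / (F + φ γ) :=
      intervalIntegral.integral_nonneg (by linarith)
        fun u _ => (one_div_pos.2 (hden u)).le
    have hout2pos : 0 ≤ ∫ γ in (g₀ + r)..(g₀ + 1/2), 1 / (F + φ γ) :=
      intervalIntegral.integral_nonneg (by linarith)
        fun u _ => (one_div_pos.2 (hden u)).le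
    have hout1le : ∫ γ in (g₀ - 1/2)..(g₀ - r), 1 / (F + φ γ) ≤ (1/2) * m⁻¹ := by
      have h' := intervalIntegral.integral_mono_on (μ := MeasureTheory.volume)
        (by linarith : g₀ - 1/2 ≤ g₀ - r) (hii _ _) intervalIntegrable_const hptw1
      rw [intervalIntegral.integral_const, smul_eq_mul] at h'
      have hminv : 0 ≤ m⁻¹ := (inv_pos.2 hmpos).le
      calc ∫ γ in (g₀ - 1/2)..(g₀ - r), 1 / (F + φ γ)
          ≤ (g₀ - r - (g₀ - 1/2)) * m⁻¹ := h'
      _ ≤ (1/2) * m⁻¹ := by nlinarith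
    have hout2le : ∫ γ in (g₀ + r)..(g₀ + 1/2), 1 / (F + φ γ) ≤ (1/2) * m⁻¹ := by
      have h' := intervalIntegral.integral_mono_on (μ := MeasureTheory.volume)
        (by linarith : g₀ + r ≤ g₀ + 1/2) (hii _ _) intervalIntegrable_const hptw2
      rw [intervalIntegral.integral_const, smul_eq_mul] at h'
      have hminv : 0 ≤ m⁻¹ := (inv_pos.2 hmpos).le
      calc ∫ γ in (g₀ + r)..(g₀ + 1/2), 1 / (F + φ γ)
          ≤ (g₀ + 1/2 - (g₀ + r)) * m⁻¹ := h'
      _ ≤ (1/2) * m⁻¹ := by nlinarith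
    rw [hshift, ← hsplit1, ← hsplit2, hmid]
    constructor
    · linarith
    · linarith
  -- translation of the base filter
  have hmap : Tendsto (fun F : ℝ => F - Fc) (nhdsWithin Fc (Set.Ioi Fc))
      (nhdsWithin 0 (Set.Ioi 0)) := by
    rw [tendsto_nhdsWithin_iff]
    constructor
    · have h' : Tendsto (fun F : ℝ => F - Fc) (nhds Fc) (nhds (Fc - Fc)) :=
        (continuous_id.sub continuous_const).tendsto Fc
      rw [sub_self] at h'
      exact h'.mono_left nhdsWithin_le_nhds
    · exact eventually_mem_nhdsWithin.mono fun F hF => Set.mem_Ioi.2 (sub_pos.2 hF)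
  -- parameter limits
  have htplus : Tendsto (fun d : ℝ => π / Real.sqrt (a/2 + d))
      (nhdsWithin 0 (Set.Ioi 0)) (nhds L) := by
    have hc : ContinuousAt (fun d : ℝ => π / Real.sqrt (a/2 + d)) 0 := by
      apply ContinuousAt.div continuousAt_const
      · exact (Real.continuous_sqrt.comp (continuous_const.add continuous_id)).continuousAt
      · show Real.sqrt (a/2 + 0) ≠ 0
        rw [add_zero]
        exact (Real.sqrt_pos.2 (by linarith)).ne'
    have h' := hc.tendsto.mono_left (nhdsWithin_le_nhds (s := Set.Ioi (0:ℝ)))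
    rw [show a/2 + 0 = a/2 by ring] at h'
    exact h'
  have htminus : Tendsto (fun d : ℝ => π / Real.sqrt (a/2 - d))
      (nhdsWithin 0 (Set.Ioi 0)) (nhds L) := by
    have hc : ContinuousAt (fun d : ℝ => π / Real.sqrt (a/2 - d)) 0 := by
      apply ContinuousAt.div continuousAt_const
      · exact (Real.continuous_sqrt.comp (continuous_const.sub continuous_id)).continuousAt
      · show Real.sqrt (a/2 - 0) ≠ 0
        rw [sub_zero]
        exact (Real.sqrt_pos.2 (by linarith)).ne'
    have h' := hc.tendsto.mono_left (nhdsWithin_le_nhds (s := Set.Ioi (0:ℝ)))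
    rw [show a/2 - 0 = a/2 by ring] at h'
    exact h'
  have hsmall : ∀ᶠ d : ℝ in nhdsWithin 0 (Set.Ioi 0), d < a/2 ∧ 0 < d := by
    have hmem : Set.Ioo (0:ℝ) (a/2) ∈ nhdsWithin (0:ℝ) (Set.Ioi 0) :=
      Ioo_mem_nhdsGT_of_mem (by constructor <;> [rfl; linarith])
    exact Filter.eventually_of_mem hmem fun d hd => ⟨hd.2, hd.1⟩
  have hsqrt0 : Tendsto (fun F : ℝ => Real.sqrt (F - Fc)) (nhdsWithin Fc (Set.Ioi Fc))
      (nhds 0) := by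
    have h' := (Real.continuous_sqrt.tendsto 0).comp
      (hmap.mono_right nhdsWithin_le_nhds)
    simpa [Function.comp_def] using h'
  -- the key squeeze
  have hS : Tendsto (fun F : ℝ => Real.sqrt (F - Fc) * ∫ γ in (0:ℝ)..1, 1 / (F + φ γ))
      (nhdsWithin Fc (Set.Ioi Fc)) (nhds L) := by
    rw [tendsto_order]
    constructor
    · intro b hb
      obtain ⟨δ, hbδ, hδa, hδ0⟩ := ((htplus.eventually_const_lt hb).and hsmall).exists
      obtain ⟨r, m, hr, hr4, hm, hFbound⟩ := bounds δ hδ0 hδa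
      have T := (aux_model_integral_tendsto (a/2 + δ) r (by linarith) hr).comp hmap
      simp only [Function.comp_def] at T
      have hev := T.eventually_const_lt hbδ
      filter_upwards [hev, eventually_mem_nhdsWithin] with F hF1 hF2
      have hFb := (hFbound F hF2).1
      have hmul := mul_le_mul_of_nonneg_left hFb (Real.sqrt_nonneg (F - Fc))
      calc b < Real.sqrt (F - Fc) * ∫ x in (-r)..r, 1 / ((F - Fc) + (a/2 + δ) * x ^ 2) := hF1
      _ ≤ _ := hmul
    · intro b hb
      obtain ⟨δ, hbδ, hδa, hδ0⟩ := ((htminus.eventually_lt_const hb).and hsmall).exists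
      obtain ⟨r, m, hr, hr4, hm, hFbound⟩ := bounds δ hδ0 hδa
      have T := (aux_model_integral_tendsto (a/2 - δ) r (by linarith) hr).comp hmap
      simp only [Function.comp_def] at T
      have T0 : Tendsto (fun F : ℝ => Real.sqrt (F - Fc) * m⁻¹)
          (nhdsWithin Fc (Set.Ioi Fc)) (nhds 0) := by
        have := hsqrt0.mul_const m⁻¹
        simpa using this
      have Tsum := T.add T0
      rw [add_zero] at Tsum
      have hev := Tsum.eventually_lt_const hbδ
      filter_upwards [hev, eventually_mem_nhdsWithin] with F hF1 hF2
      have hFb := (hFbound F hF2).2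
      have hmul := mul_le_mul_of_nonneg_left hFb (Real.sqrt_nonneg (F - Fc))
      rw [mul_add] at hmul
      calc Real.sqrt (F - Fc) * ∫ γ in (0:ℝ)..1, 1 / (F + φ γ)
          ≤ Real.sqrt (F - Fc) * (∫ x in (-r)..r, 1 / ((F - Fc) + (a/2 - δ) * x ^ 2))
            + Real.sqrt (F - Fc) * m⁻¹ := hmul
      _ < b := hF1
  -- conclude
  have hLpos : 0 < L := div_pos pi_pos (Real.sqrt_pos.2 (by linarith))
  have hfinal := hS.inv₀ hLpos.ne'
  have hLinv : L⁻¹ = Real.sqrt (a/2) / π := by rw [hL, inv_div]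
  rw [hLinv] at hfinal
  exact Tendsto.congr
    (fun F => by rw [hv F, mul_inv, div_eq_mul_inv, mul_comm]) hfinal
end

section
/- Let v̄(F) = 2(F − 1)/(1 − log F + F·log F + log(F − 1) − F·log(F − 1)) for F > 1. Then v̄(F)/(F − 1) → 2 as F → 1 from above; i.e., near the depinning threshold F_c = 1 the average velocity behaves like 2(F − F_c) in leading order, exhibiting a linear (exponent 1) depinning law. -/
open Real Filter

lemma sub_one_tendsto : Tendsto (fun F : ℝ => F - 1) (nhdsWithin 1 (Set.Ioi 1)) (nhdsWithin 0 (Set.Ioi 0)) := by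
  apply tendsto_nhdsWithin_of_tendsto_nhds_of_eventually_within
  · have : Tendsto (fun F : ℝ => F - 1) (nhds 1) (nhds (1 - 1)) :=
      (continuous_id.sub continuous_const).tendsto 1
    simpa using this.mono_left nhdsWithin_le_nhds
  · filter_upwards [self_mem_nhdsWithin] with F hF
    simpa [Set.mem_Ioi] using hF

lemma denom_tendsto :
    Tendsto (fun F : ℝ =>
      1 - Real.log F + F * Real.log F + Real.log (F - 1) - F * Real.log (F - 1))
      (nhdsWithin 1 (Set.Ioi 1)) (nhds 1) := by
  have h1 : Tendsto (fun F : ℝ => 1 - Real.log F + F * Real.log F)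
      (nhdsWithin 1 (Set.Ioi 1)) (nhds 1) := by
    have hlog : Tendsto Real.log (nhdsWithin 1 (Set.Ioi 1)) (nhds 0) := by
      simpa using (Real.continuousAt_log (by norm_num)).tendsto.mono_left
        (nhdsWithin_le_nhds (a := (1:ℝ)))
    have hid : Tendsto (fun F : ℝ => F) (nhdsWithin 1 (Set.Ioi 1)) (nhds 1) :=
      tendsto_id.mono_left nhdsWithin_le_nhds
    have := ((tendsto_const_nhds (x := (1:ℝ))).sub hlog).add (hid.mul hlog)
    simpa using this
  have h2 : Tendsto (fun F : ℝ => (F - 1) * Real.log (F - 1))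
      (nhdsWithin 1 (Set.Ioi 1)) (nhds 0) := by
    have h := tendsto_log_mul_rpow_nhdsGT_zero (zero_lt_one)
    simp only [Real.rpow_one] at h
    have := h.comp sub_one_tendsto
    exact this.congr (fun F => mul_comm _ _)
  have := h1.sub h2
  simp only [sub_zero] at this
  refine this.congr (fun F => ?_)
  ring

/-- the velocity
`v̄(F) = 2(F-1)/(1 - log F + F·log F + log(F-1) - F·log(F-1))` satisfies
`v̄(F)/(F-1) → 2` as `F → 1⁺`: a linear (exponent 1) depinning law at `F_c = 1`. -/
theorem flat_obstacle_linear_depinning :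
    Tendsto
      (fun F : ℝ =>
        (2 * (F - 1)
          / (1 - Real.log F + F * Real.log F + Real.log (F - 1) - F * Real.log (F - 1)))
        / (F - 1))
      (nhdsWithin 1 (Set.Ioi 1)) (nhds 2) := by
  have key : Tendsto (fun F : ℝ =>
      2 / (1 - Real.log F + F * Real.log F + Real.log (F - 1) - F * Real.log (F - 1)))
      (nhdsWithin 1 (Set.Ioi 1)) (nhds 2) := by
    have := (tendsto_const_nhds (x := (2:ℝ))).div denom_tendsto (by norm_num)
    rw [div_one] at this
    exact this
  refine key.congr' ?_
  filter_upwards [self_mem_nhdsWithin] with F hF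
  have h : F - 1 ≠ 0 := by
    have : (1:ℝ) < F := hF
    linarith
  rw [div_right_comm, mul_div_assoc, div_self h, mul_one]
end
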